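/- Let n ≥ 4 and let α ∈ ℝ_{>0}^n. Define Φ on {(x_1,…,x_n) ∈ (ℝ³)^n : ‖x_i‖ = α_i for all i and x_1 + ⋯ + x_n = 0} with values in ℝ^{n−3} by Φ(x)_k = ‖x_1 + ⋯ + x_{k+1}‖ for k = 1,…,n−3. Then the image of Φ equals the set of (u_1,…,u_{n−3}) ∈ ℝ^{n−3} such that, setting u_0 := α_1 and u_{n−2} := α_n, the inequalities |u_{k−1} − α_{k+1}| ≤ u_k ≤ u_{k−1} + α_{k+1} hold for all k = 1,…,n−2. -/

import Mathlib

noncomputable section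

open Matrix Complex Real

/-- Euclidean three-space. -/
abbrev R3 : Type := EuclideanSpace ℝ (Fin 3)

/-- The space of closed `n`-gons in `ℝ³` with side lengths `α`. -/
def polygonSet {n : ℕ} (α : Fin n → ℝ) : Set (Fin n → R3) :=
  { x | (∀ i, ‖x i‖ = α i) ∧ ∑ i, x i = 0 }

/-- The weight attached to the label `j ∈ {1,…,n}` (label `j` is `α_j`). -/
def wlab {n : ℕ} (α : Fin n → ℝ) (j : ℕ) : ℝ :=
  if h : j - 1 < n then α ⟨j - 1, h⟩ else 0

/-- The sequence `u_0 = α_1, u_1, …, u_{n-3}, u_{n-2} = α_n` extending a point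
`v ∈ ℝ^{n-3}`. -/
def extSeq {n : ℕ} (α : Fin n → ℝ) (v : Fin (n-3) → ℝ) (j : ℕ) : ℝ :=
  if j = 0 then wlab α 1
  else if j = n - 2 then wlab α n
  else if h : j - 1 < n - 3 then v ⟨j - 1, h⟩ else 0



def psum {n : ℕ} {M : Type*} [AddCommMonoid M] (x : Fin n → M) (j : ℕ) : M :=
  ∑ i ∈ Finset.univ.filter (fun i : Fin n => i.1 ≤ j), x i

lemma wlab_succ {n : ℕ} (α : Fin n → ℝ) (k : ℕ) (hk : k < n) :
    wlab α (k+1) = α ⟨k, hk⟩ := by simp [wlab, hk]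

lemma wlab_n {n : ℕ} (α : Fin n → ℝ) (hn : 1 ≤ n) :
    wlab α n = α ⟨n-1, by omega⟩ := by simp [wlab, show n - 1 < n by omega]

lemma extSeq_zero {n : ℕ} (α : Fin n → ℝ) (v : Fin (n-3) → ℝ) :
    extSeq α v 0 = wlab α 1 := by simp [extSeq]

lemma extSeq_last {n : ℕ} (α : Fin n → ℝ) (v : Fin (n-3) → ℝ) (hn : 3 ≤ n) :
    extSeq α v (n-2) = wlab α n := by
  rw [extSeq, if_neg (by omega), if_pos rfl]

lemma extSeq_mid {n : ℕ} (α : Fin n → ℝ) (v : Fin (n-3) → ℝ) (j : ℕ)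
    (h1 : 1 ≤ j) (h2 : j - 1 < n - 3) (h3 : j ≠ n - 2) :
    extSeq α v j = v ⟨j-1, h2⟩ := by
  rw [extSeq, if_neg (by omega), if_neg h3, dif_pos h2]

lemma psum_zero {M : Type*} [AddCommMonoid M] {n : ℕ} (hn : 0 < n) (x : Fin n → M) :
    psum x 0 = x ⟨0, hn⟩ := by
  rw [psum, show Finset.univ.filter (fun i : Fin n => i.1 ≤ 0) = {⟨0, hn⟩} by
    ext i; simp [Fin.ext_iff]]
  simp

lemma psum_succ {M : Type*} [AddCommMonoid M] {n k : ℕ} (hk1 : 1 ≤ k) (hk : k < n)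
    (x : Fin n → M) :
    psum x k = psum x (k - 1) + x ⟨k, hk⟩ := by
  rw [psum, psum, show Finset.univ.filter (fun i : Fin n => i.1 ≤ k)
      = insert ⟨k, hk⟩ (Finset.univ.filter (fun i : Fin n => i.1 ≤ k - 1)) by
    ext i; simp [Fin.ext_iff]; omega]
  rw [Finset.sum_insert (by simp; omega)]
  exact add_comm _ _

lemma sum_eq_psum {M : Type*} [AddCommMonoid M] {n : ℕ} (hn : 2 ≤ n) (x : Fin n → M) :
    ∑ i, x i = psum x (n-2) + x ⟨n-1, by omega⟩ := by
  rw [psum]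
  conv_lhs => rw [show (Finset.univ : Finset (Fin n))
      = insert ⟨n-1, by omega⟩ (Finset.univ.filter (fun i : Fin n => i.1 ≤ n - 2)) by
    ext i; simp [Fin.ext_iff]; omega]
  rw [Finset.sum_insert (by simp; omega)]
  exact add_comm _ _

lemma norm3 (x : R3) : ‖x‖ = Real.sqrt ((x 0)^2 + (x 1)^2 + (x 2)^2) := by
  rw [EuclideanSpace.norm_eq]
  simp [Fin.sum_univ_three, Real.norm_eq_abs, sq_abs]

noncomputable def mk3 (a b c : ℝ) : R3 := (WithLp.equiv 2 (Fin 3 → ℝ)).symm ![a, b, c]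

@[simp] lemma mk3_0 (a b c : ℝ) : mk3 a b c 0 = a := rfl
@[simp] lemma mk3_1 (a b c : ℝ) : mk3 a b c 1 = b := rfl
@[simp] lemma mk3_2 (a b c : ℝ) : mk3 a b c 2 = c := rfl

lemma step (p : R3) (hp2 : p 2 = 0) (a b c : ℝ) (ha : ‖p‖ = a) (hc : 0 ≤ c)
    (h1 : |a - c| ≤ b) (h2 : b ≤ a + c) :
    ∃ q : R3, q 2 = 0 ∧ ‖q‖ = b ∧ ‖q - p‖ = c := by
  have ha0 : 0 ≤ a := ha ▸ norm_nonneg p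
  have hb0 : 0 ≤ b := le_trans (abs_nonneg _) h1
  have h1a : a - c ≤ b := (le_abs_self _).trans h1
  have h1b : c - a ≤ b := (le_abs_self _).trans (by rwa [abs_sub_comm] at h1)
  have hpa : (p 0)^2 + (p 1)^2 = a^2 := by
    have := norm3 p
    rw [ha, hp2] at this
    have h' : a^2 = (p 0)^2 + (p 1)^2 + 0^2 := by
      rw [this, Real.sq_sqrt (by positivity)]
    linarith [h']
  rcases eq_or_lt_of_le ha0 with haz | hap
  · have hpz : p = 0 := by
      have : ‖p‖ = 0 := by rw [ha, ← haz]
      rwa [norm_eq_zero] at this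
    have hbc : b = c := by
      rw [← haz] at h1a h1b h2; simp at h1a h1b h2; linarith
    refine ⟨mk3 b 0 0, rfl, ?_, ?_⟩
    · rw [norm3]; simp [Real.sqrt_sq hb0]
    · rw [hpz, sub_zero, norm3]; simp [hbc, Real.sqrt_sq hc]
  · set s : ℝ := (a^2 + b^2 - c^2) / (2*a) with hs
    have hsa : 2*a*s = a^2 + b^2 - c^2 := by
        rw [hs, mul_div_cancel₀ _ (by positivity : (2*a) ≠ 0)]
    have hbs : s^2 ≤ b^2 := by
      nlinarith [mul_nonneg (by linarith : (0:ℝ) ≤ a + b - c) (by linarith : (0:ℝ) ≤ a + b + c),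
        mul_nonneg (by linarith : (0:ℝ) ≤ c + a - b) (by linarith : (0:ℝ) ≤ c - a + b),
        sq_nonneg (a*b), mul_pos hap hap]
    set t : ℝ := Real.sqrt (b^2 - s^2) with ht
    have ht2 : t^2 = b^2 - s^2 := Real.sq_sqrt (by linarith)
    refine ⟨mk3 ((s * p 0 - t * p 1)/a) ((s * p 1 + t * p 0)/a) 0, rfl, ?_, ?_⟩
    · rw [norm3]; simp only [mk3_0, mk3_1, mk3_2]
      rw [show ((s * p 0 - t * p 1)/a)^2 + ((s * p 1 + t * p 0)/a)^2 + 0^2 = b^2 by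
        field_simp; nlinarith [hpa, ht2]]
      exact Real.sqrt_sq hb0
    · have hsub : ∀ i, (mk3 ((s * p 0 - t * p 1)/a) ((s * p 1 + t * p 0)/a) 0 - p) i
          = mk3 ((s * p 0 - t * p 1)/a) ((s * p 1 + t * p 0)/a) 0 i - p i := fun i => rfl
      rw [norm3, hsub, hsub, hsub]
      simp only [mk3_0, mk3_1, mk3_2, hp2, sub_zero]
      rw [show ((s * p 0 - t * p 1)/a - p 0)^2 + ((s * p 1 + t * p 0)/a - p 1)^2 + 0^2 = c^2 by
        field_simp; nlinarith [hpa, ht2, hsa]]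
      exact Real.sqrt_sq hc

lemma chain (u : ℕ → ℝ) (β : ℕ → ℝ) (hβ : ∀ k, 0 ≤ β k) (hu0 : 0 ≤ u 0) :
    ∀ m : ℕ, (∀ k, 1 ≤ k → k ≤ m → |u (k-1) - β k| ≤ u k ∧ u k ≤ u (k-1) + β k) →
    ∃ q : ℕ → R3, (∀ j, j ≤ m → q j 2 = 0 ∧ ‖q j‖ = u j) ∧
      (∀ k, 1 ≤ k → k ≤ m → ‖q k - q (k-1)‖ = β k) := by
  intro m
  induction m with
  | zero =>
    intro _
    refine ⟨fun _ => mk3 (u 0) 0 0, fun j hj => ?_, fun k hk1 hk2 => by omega⟩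
    interval_cases j
    refine ⟨mk3_2 _ _ _, ?_⟩
    rw [norm3]
    show Real.sqrt ((u 0)^2 + 0^2 + 0^2) = u 0
    rw [show (u 0)^2 + 0^2 + 0^2 = (u 0)^2 by ring, Real.sqrt_sq hu0]
  | succ m ih =>
    intro h
    obtain ⟨q, hq1, hq2⟩ := ih (fun k hk1 hk2 => h k hk1 (by omega))
    obtain ⟨hA, hB⟩ := h (m+1) (by omega) le_rfl
    simp only [Nat.add_sub_cancel] at hA hB
    obtain ⟨q', hq'2, hq'n, hq'd⟩ := step (q m) (hq1 m le_rfl).1 (u m) (u (m+1)) (β (m+1))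
      (hq1 m le_rfl).2 (hβ _) hA hB
    refine ⟨fun j => if j ≤ m then q j else q', fun j hj => ?_, fun k hk1 hk2 => ?_⟩
    · by_cases hjm : j ≤ m
      · simpa [hjm] using hq1 j hjm
      · have : j = m + 1 := by omega
        simp [hjm, hq'2, this, hq'n]
    · by_cases hkm : k ≤ m
      · have : k - 1 ≤ m := by omega
        simpa [hkm, this] using hq2 k hk1 hkm
      · have hk : k = m + 1 := by omega
        subst hk
        simpa [Nat.add_sub_cancel] using hq'd

/-- the image of the bending system for the caterpillar triangulation is
the polytope cut out by the triangle inequalities. -/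
theorem stmt_15 (n : ℕ) (hn : 4 ≤ n) (α : Fin n → ℝ) (hα : ∀ i, 0 < α i) :
    Set.range (fun x : polygonSet α => fun k : Fin (n-3) =>
        ‖∑ i ∈ Finset.univ.filter (fun i : Fin n => i.1 ≤ k.1 + 1), x.1 i‖)
      = { v : Fin (n-3) → ℝ | ∀ k : ℕ, 1 ≤ k → k ≤ n - 2 →
          |extSeq α v (k-1) - wlab α (k+1)| ≤ extSeq α v k ∧
            extSeq α v k ≤ extSeq α v (k-1) + wlab α (k+1) } := by
  ext v
  constructor
  · rintro ⟨⟨x, hxn, hxs⟩, rfl⟩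
    show ∀ k : ℕ, 1 ≤ k → k ≤ n - 2 →
      |extSeq α (fun k : Fin (n-3) => ‖psum x (k.1+1)‖) (k-1) - wlab α (k+1)|
          ≤ extSeq α (fun k : Fin (n-3) => ‖psum x (k.1+1)‖) k ∧
        extSeq α (fun k : Fin (n-3) => ‖psum x (k.1+1)‖) k
          ≤ extSeq α (fun k : Fin (n-3) => ‖psum x (k.1+1)‖) (k-1) + wlab α (k+1)
    have key : ∀ j, j ≤ n - 2 →
        extSeq α (fun k : Fin (n-3) => ‖psum x (k.1+1)‖) j = ‖psum x j‖ := by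
      intro j hj
      rcases Nat.eq_zero_or_pos j with hj0 | hj1
      · subst hj0
        rw [extSeq_zero, wlab_succ α 0 (by omega), psum_zero (by omega) x, hxn]
      · by_cases hjn : j = n - 2
        · subst hjn
          rw [extSeq_last α _ (by omega), wlab_n α (by omega)]
          have h := sum_eq_psum (show 2 ≤ n by omega) x
          rw [hxs] at h
          have h2 : psum x (n-2) = -(x ⟨n-1, by omega⟩) := eq_neg_of_add_eq_zero_left h.symm
          rw [h2, norm_neg, hxn]
        · have h2 : j - 1 < n - 3 := by omega
          rw [extSeq_mid α _ j hj1 h2 hjn]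
          show ‖psum x ((j-1)+1)‖ = ‖psum x j‖
          rw [show j - 1 + 1 = j by omega]
    intro k hk1 hk2
    rw [key k hk2, key (k-1) (by omega), wlab_succ α k (by omega)]
    have hstep : psum x k = psum x (k-1) + x ⟨k, by omega⟩ := psum_succ hk1 (by omega) x
    constructor
    · have h := abs_norm_sub_norm_le (psum x (k-1)) (-(x ⟨k, by omega⟩))
      rw [norm_neg, sub_neg_eq_add, ← hstep, hxn] at h
      exact h
    · have h := norm_add_le (psum x (k-1)) (x ⟨k, by omega⟩)
      rw [← hstep, hxn] at h
      exact h
  · intro hv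
    simp only [Set.mem_setOf_eq] at hv
    have hβ : ∀ k : ℕ, (0:ℝ) ≤ wlab α (k+1) := by
      intro k
      rw [wlab]
      split
      · exact (hα _).le
      · exact le_refl 0
    have hu0 : 0 ≤ extSeq α v 0 := by
      rw [extSeq_zero]; exact hβ 0
    obtain ⟨q, hq1, hq2⟩ := chain (extSeq α v) (fun k => wlab α (k+1)) hβ hu0 (n-2)
      (fun k hk1 hk2 => hv k hk1 hk2)
    set x : Fin n → R3 := fun i =>
      if i.1 = 0 then q 0 else if i.1 = n - 1 then -(q (n-2)) else q i.1 - q (i.1 - 1) with hx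
    have hx0 : x ⟨0, by omega⟩ = q 0 := by rw [hx]; simp
    have hxlast : x ⟨n-1, by omega⟩ = -(q (n-2)) := by
      rw [hx]; simp [show n - 1 ≠ 0 by omega]
    have hxmid : ∀ i : Fin n, i.1 ≠ 0 → i.1 ≠ n - 1 → x i = q i.1 - q (i.1 - 1) := by
      intro i h1 h2
      rw [hx]; simp [h1, h2]
    have hT : ∀ j, j ≤ n - 2 → psum x j = q j := by
      intro j
      induction j with
      | zero =>
        intro _
        rw [psum_zero (by omega) x, hx0]
      | succ j ihj =>
        intro hj
        rw [psum_succ (by omega) (by omega : j + 1 < n) x,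
          show j + 1 - 1 = j from rfl, ihj (by omega),
          hxmid ⟨j+1, by omega⟩ (by simp) (by simp; omega)]
        show q j + (q (j+1) - q (j+1-1)) = q (j+1)
        rw [show j + 1 - 1 = j from rfl]
        abel
    have hmem : x ∈ polygonSet α := by
      constructor
      · intro i
        rcases Nat.eq_zero_or_pos i.1 with hi0 | hi1
        · have hieq : i = ⟨0, by omega⟩ := Fin.ext hi0
          rw [hieq, hx0, (hq1 0 (by omega)).2, extSeq_zero, wlab_succ α 0 (by omega)]
        · by_cases hin : i.1 = n - 1
          · have hieq : i = ⟨n-1, by omega⟩ := Fin.ext hin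
            rw [hieq, hxlast, norm_neg, (hq1 (n-2) le_rfl).2,
              extSeq_last α v (by omega), wlab_n α (by omega)]
          · rw [hxmid i (by omega) hin, hq2 i.1 hi1 (by omega), wlab_succ α i.1 i.2]
      · rw [sum_eq_psum (show 2 ≤ n by omega) x, hT (n-2) le_rfl, hxlast]
        abel
    refine ⟨⟨x, hmem⟩, ?_⟩
    funext k
    show ‖psum x (k.1+1)‖ = v k
    rw [hT (k.1+1) (by omega : k.1 + 1 ≤ n - 2), (hq1 (k.1+1) (by omega)).2,
      extSeq_mid α v (k.1+1) (by omega) (by omega) (by omega)]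
    show v ⟨k.1, _⟩ = v k
    congr
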